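/- There exists a unique m₀ ∈ (0,1) such that 2E(m₀) − K(m₀) = 0, and moreover m₀ > 1/2. -/

import Mathlib

open Real

noncomputable def ellK (m : ℝ) : ℝ :=
  ∫ θ in (0:ℝ)..(π / 2), 1 / Real.sqrt (1 - m * Real.sin θ ^ 2)

noncomputable def ellE (m : ℝ) : ℝ :=
  ∫ θ in (0:ℝ)..(π / 2), Real.sqrt (1 - m * Real.sin θ ^ 2)

namespace FigureEight

lemma den_pos {m : ℝ} (h0 : 0 ≤ m) (h1 : m < 1) (θ : ℝ) :
    0 < 1 - m * Real.sin θ ^ 2 := by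
  nlinarith [Real.sin_sq_le_one θ, sq_nonneg (Real.sin θ)]

lemma cont_inner {m : ℝ} : Continuous fun θ : ℝ => 1 - m * Real.sin θ ^ 2 := by
  continuity

lemma contE {m : ℝ} : Continuous fun θ : ℝ => Real.sqrt (1 - m * Real.sin θ ^ 2) :=
  Real.continuous_sqrt.comp cont_inner

lemma contK {m : ℝ} (h0 : 0 ≤ m) (h1 : m < 1) :
    Continuous fun θ : ℝ => 1 / Real.sqrt (1 - m * Real.sin θ ^ 2) :=
  continuous_const.div contE fun θ =>
    (Real.sqrt_pos.2 (den_pos h0 h1 θ)).ne'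

/-- combined integrand -/
noncomputable def g (m θ : ℝ) : ℝ :=
  2 * Real.sqrt (1 - m * Real.sin θ ^ 2) - 1 / Real.sqrt (1 - m * Real.sin θ ^ 2)

lemma contg {m : ℝ} (h0 : 0 ≤ m) (h1 : m < 1) : Continuous (g m) :=
  (continuous_const.mul contE).sub (contK h0 h1)

lemma f_eq {m : ℝ} (h0 : 0 ≤ m) (h1 : m < 1) :
    2 * ellE m - ellK m = ∫ θ in (0:ℝ)..(π / 2), g m θ := by
  rw [ellE, ellK, ← intervalIntegral.integral_const_mul,
    ← intervalIntegral.integral_sub (by have hc : Continuous fun θ : ℝ => 2 * Real.sqrt (1 - m * Real.sin θ ^ 2) := continuous_const.mul contE; exact hc.intervalIntegrable _ _)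
      ((contK h0 h1).intervalIntegrable _ _)]
  rfl

/-- the key pointwise monotonicity -/
lemma phi_lt {u v : ℝ} (h0 : 0 ≤ u) (huv : u < v) (hv : v < 1) :
    2 * Real.sqrt (1 - v) - 1 / Real.sqrt (1 - v)
      < 2 * Real.sqrt (1 - u) - 1 / Real.sqrt (1 - u) := by
  set a := Real.sqrt (1 - u) with ha
  set b := Real.sqrt (1 - v) with hb
  have hbpos : 0 < b := Real.sqrt_pos.2 (by linarith)
  have hba : b < a := Real.sqrt_lt_sqrt (by linarith) (by linarith)
  have hapos : 0 < a := hbpos.trans hba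
  rw [← sub_pos]
  have key : (2 * a - 1 / a) - (2 * b - 1 / b) = (a - b) * (2 * a * b + 1) / (a * b) := by
    field_simp
    ring
  rw [key]
  have h1 : 0 < a - b := by linarith
  have h2 : 0 < 2 * a * b + 1 := by positivity
  positivity

lemma g_lt {m₁ m₂ θ : ℝ} (h0 : 0 ≤ m₁) (h12 : m₁ < m₂) (h2 : m₂ < 1)
    (hθ : 0 < Real.sin θ) : g m₂ θ < g m₁ θ := by
  have hs1 : Real.sin θ ^ 2 ≤ 1 := Real.sin_sq_le_one θ
  have hs0 : 0 < Real.sin θ ^ 2 := by positivity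
  have h1 : 0 ≤ m₁ * Real.sin θ ^ 2 := by positivity
  have h2' : m₁ * Real.sin θ ^ 2 < m₂ * Real.sin θ ^ 2 := by nlinarith
  have h3 : m₂ * Real.sin θ ^ 2 < 1 := by nlinarith
  have := phi_lt h1 h2' h3
  simpa [g, sub_sub_cancel] using this

lemma sin_pos_of_mem {θ : ℝ} (hθ : θ ∈ Set.Ioc (0:ℝ) (π / 2)) : 0 < Real.sin θ :=
  Real.sin_pos_of_pos_of_lt_pi hθ.1 (lt_of_le_of_lt hθ.2 (by linarith [Real.pi_pos]))

/-- strict antitonicity of `2E - K` -/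
lemma f_strict_anti {m₁ m₂ : ℝ} (h0 : 0 ≤ m₁) (h12 : m₁ < m₂) (h2 : m₂ < 1) :
    2 * ellE m₂ - ellK m₂ < 2 * ellE m₁ - ellK m₁ := by
  have h1 : m₁ < 1 := h12.trans h2
  have h0' : 0 ≤ m₂ := h0.trans h12.le
  rw [f_eq h0 h1, f_eq h0' h2]
  apply intervalIntegral.integral_lt_integral_of_continuousOn_of_le_of_exists_lt
    (by positivity) ((contg h0' h2).continuousOn) ((contg h0 h1).continuousOn)
  · intro θ hθ
    exact (g_lt h0 h12 h2 (sin_pos_of_mem hθ)).le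
  · exact ⟨π / 2, Set.mem_Icc.2 ⟨by positivity, le_refl _⟩,
      g_lt h0 h12 h2 (by rw [Real.sin_pi_div_two]; norm_num)⟩

lemma f_half_pos : 0 < 2 * ellE (1/2) - ellK (1/2) := by
  rw [f_eq (by norm_num) (by norm_num)]
  have key : (∫ θ in (0:ℝ)..(π / 2), (0:ℝ)) < ∫ θ in (0:ℝ)..(π / 2), g (1/2) θ := by
    apply intervalIntegral.integral_lt_integral_of_continuousOn_of_le_of_exists_lt
      (by positivity) continuousOn_const ((contg (by norm_num) (by norm_num)).continuousOn)
    · intro θ _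
      have hs1 : Real.sin θ ^ 2 ≤ 1 := Real.sin_sq_le_one θ
      have hden : (1:ℝ)/2 ≤ 1 - (1/2) * Real.sin θ ^ 2 := by linarith
      have hr : Real.sqrt (1 - (1/2) * Real.sin θ ^ 2) ^ 2 = 1 - (1/2) * Real.sin θ ^ 2 :=
        Real.sq_sqrt (by linarith)
      have hrpos : 0 < Real.sqrt (1 - (1/2) * Real.sin θ ^ 2) := Real.sqrt_pos.2 (by linarith)
      simp only [g]
      rw [sub_nonneg, div_le_iff₀ hrpos]
      nlinarith
    · refine ⟨0, Set.mem_Icc.2 ⟨le_refl _, by positivity⟩, ?_⟩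
      simp [g, Real.sin_zero]
  simpa using key

/-- the endpoint near 1 -/
lemma f_near_one_neg : 2 * ellE (1023/1024) - ellK (1023/1024) < 0 := by
  have hm0 : (0:ℝ) ≤ 1023/1024 := by norm_num
  have hm1 : (1023:ℝ)/1024 < 1 := by norm_num
  -- E ≤ π/2
  have hE : ellE (1023/1024) ≤ π / 2 := by
    have h : ∫ θ in (0:ℝ)..(π / 2), Real.sqrt (1 - (1023/1024) * Real.sin θ ^ 2)
        ≤ ∫ θ in (0:ℝ)..(π / 2), (1:ℝ) := by
      apply intervalIntegral.integral_mono_on (by positivity)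
        (contE.intervalIntegrable _ _) intervalIntegrable_const
      intro θ _
      have h1 : Real.sqrt (1 - 1023 / 1024 * Real.sin θ ^ 2) ≤ Real.sqrt 1 :=
        Real.sqrt_le_sqrt (by nlinarith [sq_nonneg (Real.sin θ)])
      simpa using h1
    simpa [ellE] using h
  -- K ≥ log (16π + 1)
  have hK : Real.log (16 * π + 1) ≤ ellK (1023/1024) := by
    have hcont : ContinuousOn (fun θ : ℝ => 1 / (π / 2 + 1/32 - θ))
        (Set.uIcc (0:ℝ) (π/2)) := by
      rw [Set.uIcc_of_le (by positivity)]
      apply ContinuousOn.div continuousOn_const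
        ((continuous_const.sub continuous_id).continuousOn)
      intro θ hθ
      have := hθ.2
      show π / 2 + 1/32 - θ ≠ 0
      intro h
      nlinarith
    have hmono : (∫ θ in (0:ℝ)..(π/2), 1 / (π / 2 + 1/32 - θ))
        ≤ ∫ θ in (0:ℝ)..(π/2), 1 / Real.sqrt (1 - (1023/1024) * Real.sin θ ^ 2) := by
      apply intervalIntegral.integral_mono_on (by positivity)
        (hcont.intervalIntegrable) ((contK hm0 hm1).intervalIntegrable _ _)
      intro θ hθ
      obtain ⟨hθ0, hθπ⟩ := hθ
      have hc : 0 ≤ Real.cos θ := Real.cos_nonneg_of_mem_Icc ⟨by linarith [Real.pi_pos], hθπ⟩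
      have hcos : Real.cos θ ≤ π / 2 - θ := by
        have := Real.sin_le (x := π / 2 - θ) (by linarith)
        rwa [Real.sin_pi_div_two_sub] at this
      have hsin2 : Real.sin θ ^ 2 = 1 - Real.cos θ ^ 2 := by
        have := Real.sin_sq_add_cos_sq θ; linarith
      have hub : Real.sqrt (1 - (1023/1024) * Real.sin θ ^ 2) ≤ π / 2 + 1/32 - θ := by
        rw [Real.sqrt_le_left (by linarith)]
        nlinarith [sq_nonneg (Real.cos θ)]
      have hpos : 0 < Real.sqrt (1 - (1023/1024) * Real.sin θ ^ 2) :=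
        Real.sqrt_pos.2 (den_pos hm0 hm1 θ)
      exact one_div_le_one_div_of_le hpos hub
    have hval : (∫ θ in (0:ℝ)..(π/2), 1 / (π / 2 + 1/32 - θ)) = Real.log (16 * π + 1) := by
      have h1 : (∫ θ in (0:ℝ)..(π/2), (fun x : ℝ => 1 / x) ((π / 2 + 1/32) - θ))
          = ∫ x in ((π / 2 + 1/32) - π/2)..((π / 2 + 1/32) - 0), 1 / x :=
        intervalIntegral.integral_comp_sub_left (fun x : ℝ => 1 / x) (π / 2 + 1/32)
      rw [show (π / 2 + 1/32) - π/2 = (1/32 : ℝ) by ring,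
        show (π / 2 + 1/32) - 0 = π / 2 + 1/32 by ring] at h1
      rw [h1, integral_one_div]
      · congr 1
        field_simp
        ring
      · intro h
        rw [Set.mem_uIcc] at h
        have hπ := Real.pi_pos
        rcases h with ⟨h1', _⟩ | ⟨h1', _⟩ <;> nlinarith
    rw [ellK, ← hval]
    exact hmono
  -- numeric: π < log (16π + 1)
  have hnum : π < Real.log (16 * π + 1) := by
    have h16 : (0:ℝ) < 16 * π + 1 := by positivity
    rw [Real.lt_log_iff_exp_lt h16]
    have hπ : Real.exp π < Real.exp 3.15 := Real.exp_lt_exp.2 Real.pi_lt_d2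
    have h1 : Real.exp 1 < 2.7182818286 := Real.exp_one_lt_d9
    have he1 : (0:ℝ) < Real.exp 1 := Real.exp_pos 1
    have h25 : Real.exp (0.15:ℝ) ≤ 1 / 0.85 := by
      have h := Real.add_one_le_exp (-0.15 : ℝ)
      rw [Real.exp_neg] at h
      have hp : (0:ℝ) < Real.exp 0.15 := Real.exp_pos _
      have hinv : Real.exp 0.15 * (Real.exp 0.15)⁻¹ = 1 := mul_inv_cancel₀ hp.ne'
      nlinarith
    have h3 : Real.exp (3.15:ℝ) = Real.exp 1 * Real.exp 1 * Real.exp 1 * Real.exp 0.15 := by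
      rw [← Real.exp_add, ← Real.exp_add, ← Real.exp_add]
      norm_num
    have hA : Real.exp 1 * Real.exp 1 < 7.3891 := by nlinarith
    have hB : Real.exp 1 * Real.exp 1 * Real.exp 1 < 20.086 := by nlinarith
    have hC : Real.exp (3.15:ℝ) < 20.086 * (1 / 0.85) := by
      rw [h3]
      have hp : (0:ℝ) < Real.exp 0.15 := Real.exp_pos _
      nlinarith
    have hπ3 : (3:ℝ) < π := Real.pi_gt_three
    nlinarith
  linarith

lemma pi_lt_315' : π < 3.15 := Real.pi_lt_d2

/-- continuity of `2E - K` on `[1/2, 1023/1024]` -/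
lemma f_contOn : ContinuousOn (fun m => 2 * ellE m - ellK m)
    (Set.Icc (1/2 : ℝ) (1023/1024)) := by
  rw [continuousOn_iff_continuous_restrict]
  have heq : (Set.Icc (1/2 : ℝ) (1023/1024)).restrict (fun m => 2 * ellE m - ellK m)
      = fun p : Set.Icc (1/2 : ℝ) (1023/1024) => ∫ θ in (0:ℝ)..(π/2), g p.1 θ := by
    funext p
    exact f_eq (le_trans (by norm_num) p.2.1) (lt_of_le_of_lt p.2.2 (by norm_num))
  change Continuous ((Set.Icc (1/2 : ℝ) (1023/1024)).restrict (fun m => 2 * ellE m - ellK m))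
  rw [heq]
  apply intervalIntegral.continuous_parametric_intervalIntegral_of_continuous'
  -- continuity of uncurried integrand
  have hden : ∀ q : Set.Icc (1/2 : ℝ) (1023/1024) × ℝ,
      0 < 1 - q.1.1 * Real.sin q.2 ^ 2 := fun q =>
    den_pos (le_trans (by norm_num) q.1.2.1) (lt_of_le_of_lt q.1.2.2 (by norm_num)) q.2
  have hinner : Continuous fun q : Set.Icc (1/2 : ℝ) (1023/1024) × ℝ =>
      1 - q.1.1 * Real.sin q.2 ^ 2 := by
    apply continuous_const.sub
    exact (continuous_subtype_val.comp continuous_fst).mul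
      ((Real.continuous_sin.comp continuous_snd).pow 2)
  have hsq : Continuous fun q : Set.Icc (1/2 : ℝ) (1023/1024) × ℝ =>
      Real.sqrt (1 - q.1.1 * Real.sin q.2 ^ 2) := Real.continuous_sqrt.comp hinner
  exact ((continuous_const.mul hsq).sub
    (continuous_const.div hsq fun q => (Real.sqrt_pos.2 (hden q)).ne'))

end FigureEight

theorem figure_eight_parameter :
    (∃! m : ℝ, m ∈ Set.Ioo (0:ℝ) 1 ∧ 2 * ellE m - ellK m = 0) ∧
    (∀ m ∈ Set.Ioo (0:ℝ) 1, 2 * ellE m - ellK m = 0 → 1 / 2 < m) := by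
  have hhalf : 0 < 2 * ellE (1/2) - ellK (1/2) := FigureEight.f_half_pos
  have hone : 2 * ellE (1023/1024) - ellK (1023/1024) < 0 := FigureEight.f_near_one_neg
  have half_stmt : ∀ m ∈ Set.Ioo (0:ℝ) 1, 2 * ellE m - ellK m = 0 → 1 / 2 < m := by
    intro m hm hm0
    by_contra h
    push_neg at h
    rcases lt_or_eq_of_le h with h' | h'
    · have hlt := FigureEight.f_strict_anti hm.1.le h' (by norm_num : (1:ℝ)/2 < 1)
      linarith
    · rw [h'] at hm0
      linarith
  refine ⟨?_, half_stmt⟩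
  have hsub : Set.Icc (2 * ellE (1023/1024) - ellK (1023/1024))
      (2 * ellE (1/2) - ellK (1/2)) ⊆
      (fun m => 2 * ellE m - ellK m) '' Set.Icc (1/2 : ℝ) (1023/1024) :=
    intermediate_value_Icc' (by norm_num) FigureEight.f_contOn
  obtain ⟨m₀, hm₀S, hm₀0⟩ := hsub ⟨hone.le, hhalf.le⟩
  have hm₀0' : 2 * ellE m₀ - ellK m₀ = 0 := hm₀0
  have hm₀Ioo : m₀ ∈ Set.Ioo (0:ℝ) 1 :=
    ⟨lt_of_lt_of_le (by norm_num) hm₀S.1, lt_of_le_of_lt hm₀S.2 (by norm_num)⟩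
  refine ⟨m₀, ⟨hm₀Ioo, hm₀0'⟩, ?_⟩
  rintro m ⟨hmIoo, hm0⟩
  rcases lt_trichotomy m m₀ with h | h | h
  · have hlt := FigureEight.f_strict_anti hmIoo.1.le h hm₀Ioo.2
    linarith
  · exact h
  · have hlt := FigureEight.f_strict_anti hm₀Ioo.1.le h hmIoo.2
    linarith
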